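/- Let u be a C² radial function on ℝ² satisfying u'' + u'/r + e^{2u} ≤ 0 with u'(0)=0. Then ∫_{ℝ²} e^{2u(|x|)} dx ≤ 4π. -/

import Mathlib

open Real MeasureTheory Set Metric Module
open scoped ENNReal

theorem lintegral_fun_norm_addHaar' {E : Type*} [NormedAddCommGroup E] [NormedSpace ℝ E]
    [MeasurableSpace E] [BorelSpace E] [FiniteDimensional ℝ E] [Nontrivial E]
    (μ : Measure E) [μ.IsAddHaarMeasure] (f : ℝ → ℝ≥0∞) (hf : Measurable f) :
    ∫⁻ x, f ‖x‖ ∂μ = μ.toSphere univ *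
      ∫⁻ y in Ioi (0:ℝ), ENNReal.ofReal (y ^ (finrank ℝ E - 1)) * f y := by
  calc
    ∫⁻ x, f ‖x‖ ∂μ = ∫⁻ x : ({0}ᶜ : Set E), f ‖x.1‖ ∂(μ.comap (↑)) := by
      rw [lintegral_subtype_comap (measurableSet_singleton (0:E)).compl (fun x => f ‖x‖),
        restrict_compl_singleton]
    _ = ∫⁻ p : sphere (0 : E) 1 × Ioi (0 : ℝ), f p.2
        ∂(μ.toSphere.prod (.volumeIoiPow (finrank ℝ E - 1))) := by
      rw [← μ.measurePreserving_homeomorphUnitSphereProd.lintegral_comp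
        (by exact hf.comp (measurable_subtype_coe.comp measurable_snd))]
      simp
    _ = μ.toSphere univ * ∫⁻ y : Ioi (0:ℝ), f y ∂(Measure.volumeIoiPow (finrank ℝ E - 1)) := by
      rw [lintegral_prod _ (by exact (hf.comp (measurable_subtype_coe.comp measurable_snd)).aemeasurable)]
      simp [lintegral_const, mul_comm]
    _ = _ := by
      rw [Measure.volumeIoiPow, lintegral_withDensity_eq_lintegral_mul _
        (by exact (measurable_subtype_coe.pow_const _).ennreal_ofReal)
        (by exact hf.comp measurable_subtype_coe)]
      simp only [Pi.mul_apply]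
      rw [lintegral_subtype_comap measurableSet_Ioi
        (fun y => ENNReal.ofReal (y ^ (finrank ℝ E - 1)) * f y)]


theorem g_nonneg_le_two (u : ℝ → ℝ) (hu : ContDiff ℝ 2 u) (hu0 : deriv u 0 = 0)
    (hineq : ∀ r : ℝ, 0 < r →
      deriv (deriv u) r + deriv u r / r + Real.exp (2 * u r) ≤ 0) :
    ∀ R : ℝ, 0 ≤ R → 0 ≤ (∫ s in (0:ℝ)..R, s * Real.exp (2 * u s)) ∧
      (∫ s in (0:ℝ)..R, s * Real.exp (2 * u s)) ≤ 2 := by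
  set g : ℝ → ℝ := fun R => ∫ s in (0:ℝ)..R, s * Real.exp (2 * u s) with hg_def
  have hu1 : Differentiable ℝ u := hu.differentiable (by norm_num)
  have hud : ContDiff ℝ 1 (deriv u) := (contDiff_succ_iff_deriv.1 (hu.of_le (by norm_num))).2.2
  have hud1 : Differentiable ℝ (deriv u) := hud.differentiable (by norm_num)
  have hcE : Continuous (fun s : ℝ => Real.exp (2 * u s)) :=
    Real.continuous_exp.comp (continuous_const.mul hu1.continuous)
  have hc : Continuous (fun s : ℝ => s * Real.exp (2 * u s)) := continuous_id.mul hcE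
  have hgd : ∀ r : ℝ, HasDerivAt g (r * Real.exp (2 * u r)) r := fun r =>
    (hc.integral_hasStrictDerivAt 0 r).hasDerivAt
  have hg0 : g 0 = 0 := intervalIntegral.integral_same
  -- the auxiliary function h
  set h : ℝ → ℝ := fun r => r * deriv u r + g r with hh_def
  have hhd : ∀ r : ℝ, HasDerivAt h
      (1 * deriv u r + r * deriv (deriv u) r + r * Real.exp (2 * u r)) r := fun r =>
    ((hasDerivAt_id r).mul ((hud1 r).hasDerivAt)).add (hgd r)
  have hdiff : Differentiable ℝ h := fun r => (hhd r).differentiableAt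
  have hanti : AntitoneOn h (Ici (0:ℝ)) := by
    apply antitoneOn_of_deriv_nonpos (convex_Ici 0) (hdiff.continuous.continuousOn)
      (fun x _ => hdiff x |>.differentiableWithinAt)
    intro x hx
    rw [interior_Ici] at hx
    rw [(hhd x).deriv]
    have h1 := hineq x hx
    have hx0 : x ≠ 0 := ne_of_gt hx
    have : 1 * deriv u x + x * deriv (deriv u) x + x * Real.exp (2 * u x)
        = x * (deriv (deriv u) x + deriv u x / x + Real.exp (2 * u x)) := by
      field_simp; ring
    rw [this]
    exact mul_nonpos_of_nonneg_of_nonpos (le_of_lt hx) h1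
  have hA : ∀ r : ℝ, 0 ≤ r → r * deriv u r + g r ≤ 0 := by
    intro r hr
    have := hanti (self_mem_Ici) hr hr
    simpa [hh_def, hg0, hu0] using this
  -- the function k
  set k : ℝ → ℝ := fun r => 2 * g r - g r ^ 2 - r ^ 2 * Real.exp (2 * u r) with hk_def
  have hEd : ∀ r : ℝ, HasDerivAt (fun s : ℝ => Real.exp (2 * u s))
      (Real.exp (2 * u r) * (2 * deriv u r)) r := fun r =>
    (((hu1 r).hasDerivAt).const_mul 2).exp
  have hkd : ∀ r : ℝ, HasDerivAt k
      (2 * (r * Real.exp (2 * u r))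
        - 2 * g r ^ 1 * (r * Real.exp (2 * u r))
        - ((2 : ℕ) * r ^ 1 * Real.exp (2 * u r)
            + r ^ 2 * (Real.exp (2 * u r) * (2 * deriv u r)))) r := fun r =>
    (((hgd r).const_mul 2).sub ((hgd r).pow 2)).sub ((hasDerivAt_pow 2 r).mul (hEd r))
  have hkdiff : Differentiable ℝ k := fun r => (hkd r).differentiableAt
  have hmono : MonotoneOn k (Ici (0:ℝ)) := by
    apply monotoneOn_of_deriv_nonneg (convex_Ici 0) (hkdiff.continuous.continuousOn)
      (fun x _ => hkdiff x |>.differentiableWithinAt)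
    intro x hx
    rw [interior_Ici] at hx
    rw [(hkd x).deriv]
    have hx' : (0:ℝ) < x := hx
    have hE : 0 < Real.exp (2 * u x) := Real.exp_pos _
    have hA' := hA x hx.le
    push_cast
    nlinarith [mul_nonpos_of_nonneg_of_nonpos
      (show (0:ℝ) ≤ 2 * x * Real.exp (2 * u x) by positivity) hA']
  intro R hR
  change 0 ≤ g R ∧ g R ≤ 2
  have hgnn : 0 ≤ g R := by
    apply intervalIntegral.integral_nonneg hR
    intro s hs
    exact mul_nonneg hs.1 (Real.exp_pos _).le
  have hk0 : k 0 = 0 := by simp [hk_def, hg0]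
  have hkR : 0 ≤ k R := by
    have := hmono self_mem_Ici hR hR
    rwa [hk0] at this
  simp only [hk_def] at hkR
  have hRE : 0 ≤ R ^ 2 * Real.exp (2 * u R) := by positivity
  constructor
  · exact hgnn
  · nlinarith [hkR, hgnn, hRE]

theorem stmt_10 (u : ℝ → ℝ) (hu : ContDiff ℝ 2 u) (hu0 : deriv u 0 = 0)
    (hineq : ∀ r : ℝ, 0 < r →
      deriv (deriv u) r + deriv u r / r + Real.exp (2 * u r) ≤ 0) :
    ∫⁻ x : EuclideanSpace ℝ (Fin 2), ENNReal.ofReal (Real.exp (2 * u ‖x‖))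
      ≤ ENNReal.ofReal (4 * π) := by
  have key := g_nonneg_le_two u hu hu0 hineq
  have hu1 : Differentiable ℝ u := hu.differentiable (by norm_num)
  have hcE : Continuous (fun s : ℝ => Real.exp (2 * u s)) :=
    Real.continuous_exp.comp (continuous_const.mul hu1.continuous)
  have hc : Continuous (fun s : ℝ => s * Real.exp (2 * u s)) := continuous_id.mul hcE
  have hf : Measurable (fun r : ℝ => ENNReal.ofReal (Real.exp (2 * u r))) :=
    hcE.measurable.ennreal_ofReal
  rw [lintegral_fun_norm_addHaar' (volume : Measure (EuclideanSpace ℝ (Fin 2))) _ hf]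
  have hdim : finrank ℝ (EuclideanSpace ℝ (Fin 2)) = 2 := by
    simp [finrank_euclideanSpace]
  have hball : volume (ball (0 : EuclideanSpace ℝ (Fin 2)) 1) = ENNReal.ofReal π := by
    rw [EuclideanSpace.volume_ball]
    have h2 : ((Fintype.card (Fin 2) : ℝ) / 2 + 1) = 2 := by simp; norm_num
    rw [h2]
    simp [Real.Gamma_two, Real.sq_sqrt Real.pi_nonneg]
  have hsph : (volume : Measure (EuclideanSpace ℝ (Fin 2))).toSphere Set.univ
      = 2 * ENNReal.ofReal π := by
    rw [Measure.toSphere_apply_univ, hball, hdim]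
    norm_num
  rw [hsph, hdim]
  -- Bound the radial integral by `ofReal 2`.
  have hIoi : (∫⁻ y in Ioi (0:ℝ), ENNReal.ofReal (y ^ (2 - 1)) *
      ENNReal.ofReal (Real.exp (2 * u y))) ≤ ENNReal.ofReal 2 := by
    have hcongr : (∫⁻ y in Ioi (0:ℝ), ENNReal.ofReal (y ^ (2 - 1)) *
        ENNReal.ofReal (Real.exp (2 * u y)))
        = ∫⁻ y in Ioi (0:ℝ), ENNReal.ofReal (y * Real.exp (2 * u y)) := by
      refine setLIntegral_congr_fun measurableSet_Ioi ?_
      intro y hy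
      beta_reduce
      rw [pow_one, ← ENNReal.ofReal_mul hy.out.le]
    rw [hcongr]
    set F : ℝ → ℝ≥0∞ := fun y => ENNReal.ofReal (y * Real.exp (2 * u y)) with hF_def
    have hFm : Measurable F := hc.measurable.ennreal_ofReal
    have h1 : (∫⁻ y in Ioi (0:ℝ), F y) = ∫⁻ y, (Ioi (0:ℝ)).indicator F y := by
      rw [lintegral_indicator measurableSet_Ioi]
    have h2 : ∀ y, (Ioi (0:ℝ)).indicator F y
        = ⨆ n : ℕ, (Ioc (0:ℝ) (n:ℝ)).indicator F y := by
      intro y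
      by_cases hy : 0 < y
      · rw [Set.indicator_of_mem (Set.mem_Ioi.2 hy)]
        refine le_antisymm ?_ (iSup_le fun n => Set.indicator_le_self _ _ y)
        exact le_iSup_of_le ⌈y⌉₊
          (le_of_eq (Set.indicator_of_mem (show y ∈ Ioc (0:ℝ) (⌈y⌉₊:ℝ) from ⟨hy, Nat.le_ceil y⟩) F).symm)
      · rw [Set.indicator_of_notMem (fun h => hy (Set.mem_Ioi.1 h))]
        refine le_antisymm zero_le ?_
        refine iSup_le fun n => ?_
        rw [Set.indicator_of_notMem (fun h : y ∈ Ioc (0:ℝ) (n:ℝ) => hy h.1)]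
    rw [h1, lintegral_congr h2, lintegral_iSup
      (fun n => hFm.indicator measurableSet_Ioc)
      (fun m n hmn => Set.indicator_le_indicator_of_subset
        (Ioc_subset_Ioc_right (Nat.cast_le.2 hmn)) (fun _ => zero_le))]
    refine iSup_le fun n => ?_
    rw [lintegral_indicator measurableSet_Ioc]
    have hint : IntegrableOn (fun y : ℝ => y * Real.exp (2 * u y)) (Ioc (0:ℝ) (n:ℝ)) :=
      hc.integrableOn_Ioc
    have hnn : 0 ≤ᵐ[volume.restrict (Ioc (0:ℝ) (n:ℝ))]
        (fun y : ℝ => y * Real.exp (2 * u y)) := by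
      refine (ae_restrict_iff' measurableSet_Ioc).2 (Filter.Eventually.of_forall ?_)
      intro y hy
      exact mul_nonneg hy.1.le (Real.exp_pos _).le
    rw [hF_def, ← ofReal_integral_eq_lintegral_ofReal hint hnn]
    apply ENNReal.ofReal_le_ofReal
    rw [← intervalIntegral.integral_of_le (Nat.cast_nonneg n)]
    exact (key (n:ℝ) (Nat.cast_nonneg n)).2
  calc 2 * ENNReal.ofReal π * (∫⁻ y in Ioi (0:ℝ), ENNReal.ofReal (y ^ (2 - 1)) *
        ENNReal.ofReal (Real.exp (2 * u y)))
      ≤ 2 * ENNReal.ofReal π * ENNReal.ofReal 2 := mul_le_mul_right hIoi _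
    _ = ENNReal.ofReal (4 * π) := by
        rw [show (2:ℝ≥0∞) = ENNReal.ofReal 2 by norm_num,
          ← ENNReal.ofReal_mul (by norm_num), ← ENNReal.ofReal_mul (by positivity)]
        norm_num [mul_comm]
        rw [show (2:ℝ≥0∞) = ENNReal.ofReal 2 by norm_num, ← ENNReal.ofReal_mul (by positivity)]
        ring_nf
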